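/- Let z_0, z_1, z_2, z_3, z_4 be complex numbers, each different from 0 and 1, satisfying 1 - z_i = z_{i-1} · z_{i+1} for all i ∈ ℤ/5 (indices mod 5). Then Σ_{i∈ℤ/5} (z_i) ∧ (1 - z_i) = 0 in the second exterior power Λ²(ℂ×) of the multiplicative group of ℂ, taken as a ℤ-module (writing the group ℂ× additively). -/

import Mathlib

open ExteriorAlgebra

/-- The wedge `(x) ∧ (y)` of two units of `ℂ`, viewed as an element (of degree 2)
of the exterior algebra over `ℤ` of the multiplicative group `ℂˣ` written additively. -/
noncomputable def wedge (x y : ℂˣ) : ExteriorAlgebra ℤ (Additive ℂˣ) :=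
  ι ℤ (Additive.ofMul x) * ι ℤ (Additive.ofMul y)

lemma wedge_mul_right (x y y' : ℂˣ) : wedge x (y * y') = wedge x y + wedge x y' := by
  unfold wedge
  rw [show Additive.ofMul (y * y') = Additive.ofMul y + Additive.ofMul y' from rfl,
    map_add, mul_add]

lemma wedge_antisymm (x y : ℂˣ) : wedge x y = - wedge y x := by
  have := ι_add_mul_swap (R := ℤ) (Additive.ofMul x) (Additive.ofMul y)
  unfold wedge
  exact eq_neg_of_add_eq_zero_left this

/-- The five arguments of the cyclic form of the five-term relation satisfy
`∑ (z_i) ∧ (1 - z_i) = 0` in `Λ²(ℂˣ)`. -/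
theorem five_term_arguments_wedge_sum_eq_zero (z : ZMod 5 → ℂ)
    (h0 : ∀ i, z i ≠ 0) (h1 : ∀ i, z i ≠ 1)
    (hrec : ∀ i : ZMod 5, 1 - z i = z (i - 1) * z (i + 1)) :
    ∑ i : ZMod 5, wedge (Units.mk0 (z i) (h0 i))
      (Units.mk0 (1 - z i) (sub_ne_zero_of_ne (Ne.symm (h1 i)))) = 0 := by
  set u : ZMod 5 → ℂˣ := fun i => Units.mk0 (z i) (h0 i) with hu
  have key : ∀ i, wedge (u i) (Units.mk0 (1 - z i) (sub_ne_zero_of_ne (Ne.symm (h1 i))))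
      = wedge (u i) (u (i - 1)) + wedge (u i) (u (i + 1)) := by
    intro i
    rw [← wedge_mul_right]
    congr 1
    ext
    exact hrec i
  change ∑ i : ZMod 5, wedge (u i) (Units.mk0 (1 - z i) (sub_ne_zero_of_ne (Ne.symm (h1 i)))) = 0
  simp only [key]
  rw [Finset.sum_add_distrib]
  have hre : ∑ i : ZMod 5, wedge (u i) (u (i - 1))
      = ∑ i : ZMod 5, wedge (u (i + 1)) (u i) := by
    exact Fintype.sum_equiv (Equiv.subRight 1) _ _ (by intro j; simp)
  rw [hre, ← Finset.sum_add_distrib]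
  apply Finset.sum_eq_zero
  intro i _
  rw [wedge_antisymm (u (i+1)) (u i)]
  exact neg_add_cancel _
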